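/- Let n = m + r and let B ∈ ℝ^{n×n} be the block-diagonal Jordan matrix consisting of r two-dimensional Jordan blocks [[λ_i, 1],[0, λ_i]] for i = 1, …, r followed by the 1×1 blocks λ_{r+1}, …, λ_m, where λ_1, …, λ_m are nonzero real and pairwise distinct. Let ξ, η ∈ ℝⁿ satisfy ξ_i η_i > 0 for every index i in {2, 4, …, 2r} ∪ {2r+1, …, n}, and let T ∈ ℝ^{n×n} be the transition matrix defined blockwise by: for each i = 1, …, r, the 2×2 diagonal block with (2i−1,2i−1) and (2i,2i) entries equal to η_{2i}/ξ_{2i} and (2i−1,2i) entry equal to η_{2i−1}/ξ_{2i} − ξ_{2i−1}η_{2i}/ξ_{2i}², and for each j = 2r+1, …, n the diagonal entry η_j/ξ_j, with all other entries zero. Then Tξ = η, T commutes with B, and there exists a sequence (S_q)_{q≥1} of real n×n matrices such that for every q, S_q^q = T and S_q commutes with B, and S_q converges to the identity matrix as q → ∞. -/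

import Mathlib

open Matrix MeasureTheory Polynomial

/-- The product `(I + u(l-1)B) ⋯ (I + u(1)B)(I + u(0)B)`. -/
noncomputable def prodCtrl {n : ℕ} (B : Matrix (Fin n) (Fin n) ℝ) (l : ℕ) (u : ℕ → ℝ) :
    Matrix (Fin n) (Fin n) ℝ :=
  ((List.range l).reverse.map fun k => (1 : Matrix (Fin n) (Fin n) ℝ) + u k • B).prod

/-- `ξ` can be steered to `η` in the system `x(k+1) = (I + u(k)B) x(k)`. -/
noncomputable def steers {n : ℕ} (B : Matrix (Fin n) (Fin n) ℝ) (ξ η : Fin n → ℝ) : Prop :=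
  ∃ l : ℕ, 1 ≤ l ∧ ∃ u : ℕ → ℝ, (prodCtrl B l u).mulVec ξ = η

/-- Near-controllability: outside two Lebesgue-null sets, any state can be steered to any state. -/
noncomputable def nearlyControllable {n : ℕ} (B : Matrix (Fin n) (Fin n) ℝ) : Prop :=
  ∃ E F : Set (Fin n → ℝ), volume E = 0 ∧ volume F = 0 ∧
    ∀ ξ ∉ E, ∀ η ∉ F, steers B ξ η

/-- The matrix `[ξ, Bξ, B²ξ, …, B^{n-1}ξ]`. -/
noncomputable def ctrlMat {n : ℕ} (B : Matrix (Fin n) (Fin n) ℝ) (ξ : Fin n → ℝ) :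
    Matrix (Fin n) (Fin n) ℝ :=
  Matrix.of fun i j => (B ^ (j : ℕ)).mulVec ξ i

/-- The `N × N` Jordan block with eigenvalue `lam`. -/
def jordanBlock (N : ℕ) (lam : ℝ) : Matrix (Fin N) (Fin N) ℝ :=
  Matrix.of fun i j => if i = j then lam else if (j : ℕ) = (i : ℕ) + 1 then 1 else 0

/-- Block-diagonal Jordan matrix: `r` two-dimensional Jordan blocks with eigenvalues
`lam 0, …, lam (r-1)` followed by `1 × 1` blocks `lam r, …, lam (m-1)` (so `n = m + r`). -/
def pairJordan (n r : ℕ) (lam : ℕ → ℝ) : Matrix (Fin n) (Fin n) ℝ :=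
  Matrix.of fun i j =>
    if (i : ℕ) = (j : ℕ) then
      (if (i : ℕ) < 2 * r then lam ((i : ℕ) / 2) else lam ((i : ℕ) - r))
    else if (j : ℕ) = (i : ℕ) + 1 ∧ (i : ℕ) < 2 * r ∧ (i : ℕ) % 2 = 0 then 1 else 0


/-- Extension of a vector on `Fin n` to `ℕ` (by zero). -/
def extVec {n : ℕ} (ξ : Fin n → ℝ) : ℕ → ℝ := fun k => if h : k < n then ξ ⟨k, h⟩ else 0

/-- The transition matrix `T_{ξ → η}` of the paper (0-based indexing): for each of the `r`
two-dimensional blocks occupying indices `2t, 2t+1`, the diagonal entries are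
`η_{2t+1}/ξ_{2t+1}` and the superdiagonal entry is
`η_{2t}/ξ_{2t+1} - ξ_{2t} η_{2t+1}/ξ_{2t+1}²`; for `j ≥ 2r` the diagonal entry is
`η_j/ξ_j`; all other entries vanish. -/
noncomputable def transMat {n : ℕ} (r : ℕ) (ξ η : Fin n → ℝ) :
    Matrix (Fin n) (Fin n) ℝ :=
  Matrix.of fun i j =>
    if (i : ℕ) = (j : ℕ) then
      (if (i : ℕ) < 2 * r then
        extVec η (2 * ((i : ℕ) / 2) + 1) / extVec ξ (2 * ((i : ℕ) / 2) + 1)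
      else η i / ξ i)
    else if (j : ℕ) = (i : ℕ) + 1 ∧ (i : ℕ) < 2 * r ∧ (i : ℕ) % 2 = 0 then
      η i / ξ j - ξ i * η j / ξ j ^ 2
    else 0

/-- the transition matrix `T` maps `ξ` to `η`, commutes with `B`, and admits
for every `q ≥ 1` a `q`-th root `S q` commuting with `B`, with `S q → I` as `q → ∞`. -/


def pidx (r k : ℕ) : ℕ := if k < 2 * r then k / 2 else k

def blk (n r : ℕ) (d b : ℕ → ℝ) : Matrix (Fin n) (Fin n) ℝ :=
  Matrix.of fun i j =>
    if (i : ℕ) = (j : ℕ) then d (pidx r i)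
    else if (j : ℕ) = (i : ℕ) + 1 ∧ (i : ℕ) < 2 * r ∧ (i : ℕ) % 2 = 0 then b ((i : ℕ) / 2)
    else 0

def strip (n r : ℕ) (b : ℕ → ℝ) : Matrix (Fin n) (Fin n) ℝ :=
  Matrix.of fun i j =>
    if (j : ℕ) = (i : ℕ) + 1 ∧ (i : ℕ) < 2 * r ∧ (i : ℕ) % 2 = 0 then b ((i : ℕ) / 2) else 0

lemma blk_ext (n r : ℕ) {d b d' b' : ℕ → ℝ} (h1 : ∀ k, d k = d' k) (h2 : ∀ t, b t = b' t) :
    blk n r d b = blk n r d' b' := by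
  obtain rfl : d = d' := funext h1
  obtain rfl : b = b' := funext h2
  rfl

lemma blk_eq (n r : ℕ) (d b : ℕ → ℝ) :
    blk n r d b = Matrix.diagonal (fun i : Fin n => d (pidx r i)) + strip n r b := by
  ext i j
  simp only [blk, strip, Matrix.of_apply, Matrix.add_apply, Matrix.diagonal_apply]
  by_cases h : (i : ℕ) = (j : ℕ)
  · have : i = j := Fin.ext h
    subst this
    simp
  · have : ¬ i = j := fun hh => h (by rw [hh])
    simp [h, this]

lemma strip_mul_strip (n r : ℕ) (b b' : ℕ → ℝ) : strip n r b * strip n r b' = 0 := by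
  ext i j
  rw [Matrix.mul_apply]
  refine Finset.sum_eq_zero fun k _ => ?_
  simp only [strip, Matrix.of_apply, Matrix.zero_apply]
  by_cases h : (k : ℕ) = (i : ℕ) + 1 ∧ (i : ℕ) < 2 * r ∧ (i : ℕ) % 2 = 0
  · have h2 : ¬ ((j : ℕ) = (k : ℕ) + 1 ∧ (k : ℕ) < 2 * r ∧ (k : ℕ) % 2 = 0) := by omega
    rw [if_neg h2, mul_zero]
  · rw [if_neg h, zero_mul]

lemma diagonal_mul_strip (n r : ℕ) (d b : ℕ → ℝ) :
    Matrix.diagonal (fun i : Fin n => d (pidx r i)) * strip n r b =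
      strip n r (fun t => d t * b t) := by
  ext i j
  rw [Matrix.diagonal_mul]
  simp only [strip, Matrix.of_apply]
  by_cases h : (j : ℕ) = (i : ℕ) + 1 ∧ (i : ℕ) < 2 * r ∧ (i : ℕ) % 2 = 0
  · have hp : pidx r (i : ℕ) = (i : ℕ) / 2 := by simp only [pidx, if_pos h.2.1]
    rw [if_pos h, if_pos h, hp]
  · rw [if_neg h, if_neg h, mul_zero]

lemma strip_mul_diagonal (n r : ℕ) (d b : ℕ → ℝ) :
    strip n r b * Matrix.diagonal (fun i : Fin n => d (pidx r i)) =
      strip n r (fun t => b t * d t) := by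
  ext i j
  rw [Matrix.mul_diagonal]
  simp only [strip, Matrix.of_apply]
  by_cases h : (j : ℕ) = (i : ℕ) + 1 ∧ (i : ℕ) < 2 * r ∧ (i : ℕ) % 2 = 0
  · have hj : (j : ℕ) < 2 * r := by omega
    have hp : pidx r (j : ℕ) = (i : ℕ) / 2 := by
      simp only [pidx, if_pos hj]; omega
    rw [if_pos h, if_pos h, hp]
  · rw [if_neg h, if_neg h, zero_mul]

lemma blk_mul (n r : ℕ) (d b d' b' : ℕ → ℝ) :
    blk n r d b * blk n r d' b' =
      blk n r (fun k => d k * d' k) (fun t => d t * b' t + b t * d' t) := by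
  rw [blk_eq, blk_eq, blk_eq, add_mul, mul_add, mul_add,
    Matrix.diagonal_mul_diagonal, diagonal_mul_strip, strip_mul_diagonal, strip_mul_strip]
  have : strip n r (fun t => d t * b' t) + strip n r (fun t => b t * d' t) =
      strip n r (fun t => d t * b' t + b t * d' t) := by
    ext i j
    simp only [strip, Matrix.of_apply, Matrix.add_apply]
    split_ifs <;> simp
  rw [add_zero, add_assoc, this]

lemma blk_one (n r : ℕ) : blk n r (fun _ => 1) (fun _ => 0) = 1 := by
  ext i j
  simp only [blk, Matrix.of_apply, Matrix.one_apply]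
  by_cases h : (i : ℕ) = (j : ℕ)
  · simp [h, Fin.ext h]
  · have : ¬ i = j := fun hh => h (by rw [hh])
    simp [h, this]

lemma blk_pow (n r : ℕ) (d b : ℕ → ℝ) (q : ℕ) :
    blk n r d b ^ q =
      blk n r (fun k => d k ^ q) (fun t => q * d t ^ (q - 1) * b t) := by
  induction q with
  | zero => simp [blk_one]
  | succ q ih =>
    rw [pow_succ, ih, blk_mul]
    refine blk_ext n r (fun k => (pow_succ _ _).symm) (fun t => ?_)
    cases q with
    | zero => norm_num
    | succ p => simp only [Nat.add_sub_cancel]; push_cast; ring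

lemma blk_comm (n r : ℕ) (d b d' b' : ℕ → ℝ) :
    blk n r d b * blk n r d' b' = blk n r d' b' * blk n r d b := by
  rw [blk_mul, blk_mul]
  exact blk_ext n r (fun k => mul_comm _ _) (fun t => by ring)

lemma blk_diag (n r : ℕ) (d b : ℕ → ℝ) (i : Fin n) :
    blk n r d b i i = d (pidx r (i : ℕ)) := by
  simp [blk]

lemma blk_super (n r : ℕ) (d b : ℕ → ℝ) (i j : Fin n) (h : (j : ℕ) = (i : ℕ) + 1)
    (h2 : (i : ℕ) < 2 * r) (h3 : (i : ℕ) % 2 = 0) :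
    blk n r d b i j = b ((i : ℕ) / 2) := by
  have h1 : ¬ ((i : ℕ) = (j : ℕ)) := by omega
  simp only [blk, Matrix.of_apply, if_neg h1, if_pos (⟨h, h2, h3⟩ :
    (j : ℕ) = (i : ℕ) + 1 ∧ (i : ℕ) < 2 * r ∧ (i : ℕ) % 2 = 0)]

lemma blk_off (n r : ℕ) (d b : ℕ → ℝ) (i j : Fin n) (h1 : ¬ ((i : ℕ) = (j : ℕ)))
    (h2 : ¬ ((j : ℕ) = (i : ℕ) + 1 ∧ (i : ℕ) < 2 * r ∧ (i : ℕ) % 2 = 0)) :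
    blk n r d b i j = 0 := by
  simp only [blk, Matrix.of_apply, if_neg h1, if_neg h2]

lemma extVec_coe {n : ℕ} (ξ : Fin n → ℝ) (i : Fin n) : extVec ξ (i : ℕ) = ξ i := by
  simp [extVec]

noncomputable def dT {n : ℕ} (r : ℕ) (ξ η : Fin n → ℝ) : ℕ → ℝ := fun k =>
  if k < r then extVec η (2 * k + 1) / extVec ξ (2 * k + 1)
  else if 2 * r ≤ k ∧ k < n then extVec η k / extVec ξ k else 1

noncomputable def bT {n : ℕ} (ξ η : Fin n → ℝ) : ℕ → ℝ := fun t =>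
  extVec η (2 * t) / extVec ξ (2 * t + 1) -
    extVec ξ (2 * t) * extVec η (2 * t + 1) / extVec ξ (2 * t + 1) ^ 2

lemma transMat_eq {n : ℕ} (r : ℕ) (ξ η : Fin n → ℝ) :
    transMat r ξ η = blk n r (dT r ξ η) (bT ξ η) := by
  ext i j
  simp only [transMat, blk, Matrix.of_apply]
  by_cases h : (i : ℕ) = (j : ℕ)
  · rw [if_pos h, if_pos h]
    by_cases h2 : (i : ℕ) < 2 * r
    · rw [if_pos h2]
      have hp : pidx r (i : ℕ) = (i : ℕ) / 2 := by simp only [pidx, if_pos h2]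
      have hlt : (i : ℕ) / 2 < r := by omega
      rw [hp, dT, if_pos hlt]
    · rw [if_neg h2]
      have hp : pidx r (i : ℕ) = (i : ℕ) := by simp only [pidx, if_neg h2]
      rw [hp, dT, if_neg (by omega), if_pos ⟨by omega, i.isLt⟩, extVec_coe, extVec_coe]
  · rw [if_neg h, if_neg h]
    by_cases h2 : (j : ℕ) = (i : ℕ) + 1 ∧ (i : ℕ) < 2 * r ∧ (i : ℕ) % 2 = 0
    · rw [if_pos h2, if_pos h2, bT]
      have e1 : 2 * ((i : ℕ) / 2) = (i : ℕ) := by omega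
      have e2 : (i : ℕ) + 1 = (j : ℕ) := h2.1.symm
      rw [e1, e2, extVec_coe, extVec_coe, extVec_coe, extVec_coe]
    · rw [if_neg h2, if_neg h2]

def dB (r : ℕ) (lam : ℕ → ℝ) : ℕ → ℝ := fun k => if k < r then lam k else lam (k - r)

lemma pairJordan_eq (n r : ℕ) (lam : ℕ → ℝ) :
    pairJordan n r lam = blk n r (dB r lam) (fun _ => 1) := by
  ext i j
  simp only [pairJordan, blk, Matrix.of_apply]
  by_cases h : (i : ℕ) = (j : ℕ)
  · rw [if_pos h, if_pos h]
    by_cases h2 : (i : ℕ) < 2 * r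
    · have hp : pidx r (i : ℕ) = (i : ℕ) / 2 := by simp only [pidx, if_pos h2]
      rw [if_pos h2, hp, dB, if_pos (by omega)]
    · have hp : pidx r (i : ℕ) = (i : ℕ) := by simp only [pidx, if_neg h2]
      rw [if_neg h2, hp, dB, if_neg (by omega)]
  · rw [if_neg h, if_neg h]

theorem stmt8 {m r n : ℕ} (hr : r ≤ m) (hn : n = m + r)
    (lam : ℕ → ℝ) (hnz : ∀ i < m, lam i ≠ 0)
    (hdist : ∀ i < m, ∀ j < m, i ≠ j → lam i ≠ lam j)
    (ξ η : Fin n → ℝ)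
    (horth : ∀ i : Fin n, (((i : ℕ) % 2 = 1 ∧ (i : ℕ) < 2 * r) ∨ 2 * r ≤ (i : ℕ)) →
      0 < ξ i * η i) :
    (transMat r ξ η).mulVec ξ = η ∧
    transMat r ξ η * pairJordan n r lam = pairJordan n r lam * transMat r ξ η ∧
    ∃ S : ℕ → Matrix (Fin n) (Fin n) ℝ,
      (∀ q : ℕ, 1 ≤ q → S q ^ q = transMat r ξ η ∧
        S q * pairJordan n r lam = pairJordan n r lam * S q) ∧
      Filter.Tendsto S Filter.atTop (nhds 1) := by
  have h2rn : 2 * r ≤ n := by omega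
  have hd : ∀ k, 0 < dT r ξ η k := by
    intro k
    unfold dT
    split_ifs with h1 h2
    · have hlt : 2 * k + 1 < n := by omega
      have hi := horth ⟨2 * k + 1, hlt⟩ (Or.inl ⟨by simp, by simp; omega⟩)
      have hξ : ξ ⟨2 * k + 1, hlt⟩ ≠ 0 := by
        intro h0; rw [h0, zero_mul] at hi; exact lt_irrefl 0 hi
      have e1 : extVec η (2 * k + 1) = η ⟨2 * k + 1, hlt⟩ := dif_pos hlt
      have e2 : extVec ξ (2 * k + 1) = ξ ⟨2 * k + 1, hlt⟩ := dif_pos hlt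
      rw [e1, e2]
      have he : η ⟨2 * k + 1, hlt⟩ / ξ ⟨2 * k + 1, hlt⟩ =
          (ξ ⟨2 * k + 1, hlt⟩ * η ⟨2 * k + 1, hlt⟩) /
            (ξ ⟨2 * k + 1, hlt⟩ * ξ ⟨2 * k + 1, hlt⟩) := by
        rw [mul_div_mul_left _ _ hξ]
      rw [he]
      exact div_pos hi (mul_self_pos.2 hξ)
    · have hlt : k < n := h2.2
      have hi := horth ⟨k, hlt⟩ (Or.inr h2.1)
      have hξ : ξ ⟨k, hlt⟩ ≠ 0 := by
        intro h0; rw [h0, zero_mul] at hi; exact lt_irrefl 0 hi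
      have e1 : extVec η k = η ⟨k, hlt⟩ := dif_pos hlt
      have e2 : extVec ξ k = ξ ⟨k, hlt⟩ := dif_pos hlt
      rw [e1, e2]
      have he : η ⟨k, hlt⟩ / ξ ⟨k, hlt⟩ =
          (ξ ⟨k, hlt⟩ * η ⟨k, hlt⟩) / (ξ ⟨k, hlt⟩ * ξ ⟨k, hlt⟩) := by
        rw [mul_div_mul_left _ _ hξ]
      rw [he]
      exact div_pos hi (mul_self_pos.2 hξ)
    · exact one_pos
  have hT : transMat r ξ η = blk n r (dT r ξ η) (bT ξ η) := transMat_eq r ξ η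
  have hBJ : pairJordan n r lam = blk n r (dB r lam) (fun _ => 1) := pairJordan_eq n r lam
  have hξne : ∀ i : Fin n, (((i : ℕ) % 2 = 1 ∧ (i : ℕ) < 2 * r) ∨ 2 * r ≤ (i : ℕ)) → ξ i ≠ 0 := by
    intro i hi h0
    have := horth i hi
    rw [h0, zero_mul] at this
    exact lt_irrefl 0 this
  refine ⟨?_, ?_, ?_⟩
  · -- mulVec
    rw [hT]
    funext i
    simp only [Matrix.mulVec, dotProduct]
    by_cases hi : (i : ℕ) < 2 * r ∧ (i : ℕ) % 2 = 0
    · have hin : (i : ℕ) + 1 < n := by omega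
      set i' : Fin n := ⟨(i : ℕ) + 1, hin⟩ with hi'def
      have hvi' : (i' : ℕ) = (i : ℕ) + 1 := rfl
      have hsum : ∀ j : Fin n, blk n r (dT r ξ η) (bT ξ η) i j * ξ j =
          (if j = i then dT r ξ η ((i : ℕ) / 2) * ξ i else 0) +
          (if j = i' then bT ξ η ((i : ℕ) / 2) * ξ i' else 0) := by
        intro j
        by_cases hj : j = i
        · have hne : ¬ (j = i') := by
            intro h
            have hc : (j : ℕ) = (i' : ℕ) := by rw [h]
            have hc2 : (j : ℕ) = (i : ℕ) := by rw [hj]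
            omega
          rw [if_pos hj, if_neg hne, add_zero, hj, blk_diag]
          have hp : pidx r (i : ℕ) = (i : ℕ) / 2 := by simp only [pidx, if_pos hi.1]
          rw [hp]
        · by_cases hj' : j = i'
          · have hvj : (j : ℕ) = (i : ℕ) + 1 := by rw [hj']
            rw [if_neg hj, if_pos hj', zero_add, blk_super n r _ _ i j hvj hi.1 hi.2, hj']
          · have h1 : ¬ ((i : ℕ) = (j : ℕ)) := fun h => hj (Fin.ext h.symm)
            have h2 : ¬ ((j : ℕ) = (i : ℕ) + 1 ∧ (i : ℕ) < 2 * r ∧ (i : ℕ) % 2 = 0) :=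
              fun h => hj' (Fin.ext (h.1.trans hvi'.symm))
            rw [if_neg hj, if_neg hj', blk_off n r _ _ i j h1 h2, zero_mul, add_zero]
      rw [Finset.sum_congr rfl fun j _ => hsum j, Finset.sum_add_distrib,
        Finset.sum_ite_eq' Finset.univ i, Finset.sum_ite_eq' Finset.univ i']
      simp only [Finset.mem_univ, if_true]
      have hir : (i : ℕ) / 2 < r := by omega
      have e2 : 2 * ((i : ℕ) / 2) + 1 = (i' : ℕ) := by rw [hvi']; omega
      have e1 : 2 * ((i : ℕ) / 2) = (i : ℕ) := by omega
      unfold dT bT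
      rw [if_pos hir, e2, e1, extVec_coe, extVec_coe, extVec_coe, extVec_coe]
      have hξ' : ξ i' ≠ 0 := hξne i' (Or.inl ⟨by rw [hvi']; omega, by rw [hvi']; omega⟩)
      field_simp
      ring
    · rw [Finset.sum_eq_single i]
      · rw [blk_diag]
        by_cases h2 : (i : ℕ) < 2 * r
        · have hodd : (i : ℕ) % 2 = 1 := by omega
          have hp : pidx r (i : ℕ) = (i : ℕ) / 2 := by simp only [pidx, if_pos h2]
          have hir : (i : ℕ) / 2 < r := by omega
          rw [hp]
          unfold dT
          rw [if_pos hir]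
          have e : 2 * ((i : ℕ) / 2) + 1 = (i : ℕ) := by omega
          rw [e, extVec_coe, extVec_coe]
          have hξi : ξ i ≠ 0 := hξne i (Or.inl ⟨hodd, h2⟩)
          field_simp
        · have hp : pidx r (i : ℕ) = (i : ℕ) := by simp only [pidx, if_neg h2]
          rw [hp]
          unfold dT
          rw [if_neg (by omega), if_pos ⟨by omega, i.isLt⟩, extVec_coe, extVec_coe]
          have hξi : ξ i ≠ 0 := hξne i (Or.inr (by omega))
          field_simp
      · intro j _ hj
        have h1 : ¬ ((i : ℕ) = (j : ℕ)) := fun h => hj (Fin.ext h.symm)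
        have h2 : ¬ ((j : ℕ) = (i : ℕ) + 1 ∧ (i : ℕ) < 2 * r ∧ (i : ℕ) % 2 = 0) :=
          fun h => hi ⟨h.2.1, h.2.2⟩
        rw [blk_off n r _ _ i j h1 h2, zero_mul]
      · intro h; exact absurd (Finset.mem_univ i) h
  · rw [hT, hBJ]
    exact blk_comm n r _ _ _ _
  · refine ⟨fun q => blk n r (fun k => dT r ξ η k ^ ((q : ℝ)⁻¹))
      (fun t => bT ξ η t / (q * (dT r ξ η t ^ ((q : ℝ)⁻¹)) ^ (q - 1))), ?_, ?_⟩
    · intro q hq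
      have hq0 : (q : ℝ) ≠ 0 := Nat.cast_ne_zero.2 (by omega)
      constructor
      · rw [blk_pow, hT]
        refine blk_ext n r (fun k => ?_) (fun t => ?_)
        · rw [← Real.rpow_natCast (dT r ξ η k ^ ((q : ℝ)⁻¹)) q, ← Real.rpow_mul (hd k).le,
            inv_mul_cancel₀ hq0, Real.rpow_one]
        · have hA : (0 : ℝ) < dT r ξ η t ^ ((q : ℝ)⁻¹) := Real.rpow_pos_of_pos (hd t) _
          have hne : (q : ℝ) * (dT r ξ η t ^ ((q : ℝ)⁻¹)) ^ (q - 1) ≠ 0 :=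
            ne_of_gt (mul_pos (by positivity) (pow_pos hA _))
          have hgen : ∀ c b : ℝ, c ≠ 0 → c * (b / c) = b := fun c b hc => by field_simp
          exact hgen _ _ hne
      · rw [hBJ]
        exact blk_comm n r _ _ _ _
    · rw [← blk_one n r]
      refine tendsto_pi_nhds.2 fun i => tendsto_pi_nhds.2 fun j => ?_
      simp only [blk, Matrix.of_apply]
      split_ifs with h1 h2
      · have hdk := hd (pidx r (i : ℕ))
        have heq : ∀ q : ℕ, dT r ξ η (pidx r (i : ℕ)) ^ ((q : ℝ)⁻¹) =
            Real.exp (Real.log (dT r ξ η (pidx r (i : ℕ))) * (q : ℝ)⁻¹) :=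
          fun q => Real.rpow_def_of_pos hdk _
        refine Filter.Tendsto.congr (fun q => (heq q).symm) ?_
        have hinv : Filter.Tendsto (fun q : ℕ => ((q : ℝ))⁻¹) Filter.atTop (nhds 0) :=
          tendsto_inv_atTop_zero.comp tendsto_natCast_atTop_atTop
        have hexp : Filter.Tendsto
            (fun q : ℕ => Real.log (dT r ξ η (pidx r (i : ℕ))) * (q : ℝ)⁻¹)
            Filter.atTop (nhds 0) := by
          simpa using hinv.const_mul (Real.log (dT r ξ η (pidx r (i : ℕ))))
        have hcomp := (Real.continuous_exp.tendsto 0).comp hexp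
        simpa [Function.comp_def] using hcomp
      · have hdt := hd ((i : ℕ) / 2)
        have hinv : Filter.Tendsto (fun q : ℕ => ((q : ℝ))⁻¹) Filter.atTop (nhds 0) :=
          tendsto_inv_atTop_zero.comp tendsto_natCast_atTop_atTop
        have hrat : Filter.Tendsto (fun q : ℕ => ((q - 1 : ℕ) : ℝ) * ((q : ℝ))⁻¹)
            Filter.atTop (nhds 1) := by
          have h1' : Filter.Tendsto (fun q : ℕ => 1 - ((q : ℝ))⁻¹) Filter.atTop (nhds 1) := by
            have hc : Filter.Tendsto (fun _ : ℕ => (1 : ℝ)) Filter.atTop (nhds 1) :=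
              tendsto_const_nhds
            simpa using hc.sub hinv
          refine h1'.congr' ?_
          filter_upwards [Filter.eventually_ge_atTop 1] with q hq
          have hc : ((q - 1 : ℕ) : ℝ) = (q : ℝ) - 1 := by
            push_cast [Nat.cast_sub hq]
            ring
          have hq0 : (q : ℝ) ≠ 0 := Nat.cast_ne_zero.2 (by omega)
          rw [hc]
          field_simp
        have heq : ∀ q : ℕ, (dT r ξ η ((i : ℕ) / 2) ^ ((q : ℝ)⁻¹)) ^ (q - 1) =
            Real.exp (Real.log (dT r ξ η ((i : ℕ) / 2)) * (((q - 1 : ℕ) : ℝ) * ((q : ℝ))⁻¹)) := by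
          intro q
          rw [Real.rpow_def_of_pos hdt, ← Real.exp_nat_mul]
          congr 1
          ring
        have hexp : Filter.Tendsto
            (fun q : ℕ => Real.log (dT r ξ η ((i : ℕ) / 2)) * (((q - 1 : ℕ) : ℝ) * ((q : ℝ))⁻¹))
            Filter.atTop (nhds (Real.log (dT r ξ η ((i : ℕ) / 2)))) := by
          simpa using hrat.const_mul (Real.log (dT r ξ η ((i : ℕ) / 2)))
        have hAl : Filter.Tendsto (fun q : ℕ => (dT r ξ η ((i : ℕ) / 2) ^ ((q : ℝ)⁻¹)) ^ (q - 1))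
            Filter.atTop (nhds (dT r ξ η ((i : ℕ) / 2))) := by
          have hcomp := (Real.continuous_exp.tendsto (Real.log (dT r ξ η ((i : ℕ) / 2)))).comp hexp
          rw [Real.exp_log hdt] at hcomp
          exact hcomp.congr fun q => (heq q).symm
        have hden : Filter.Tendsto
            (fun q : ℕ => (q : ℝ) * (dT r ξ η ((i : ℕ) / 2) ^ ((q : ℝ)⁻¹)) ^ (q - 1))
            Filter.atTop Filter.atTop :=
          Filter.Tendsto.atTop_mul_pos hdt tendsto_natCast_atTop_atTop hAl
        exact tendsto_const_nhds.div_atTop hden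
      · exact tendsto_const_nhds
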